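/- Let I be an ideal of a Noetherian commutative ring R. Then I satisfies the countable strong annihilator condition (for every countable S ⊆ I there is a ∈ I with Ann(S) = Ann(a)) if and only if I satisfies the strong annihilator condition (for every finite F ⊆ I there is a ∈ I with Ann(F) = Ann(a)). -/
import Mathlib

/-- If the span of `S` is finitely generated, there is a finite subset of `S`
with the same span. -/
lemma exists_finset_span_eq_aux {R : Type*} [CommRing R] (S : Set R)
    (hfg : (Ideal.span S).FG) :
    ∃ T : Finset R, ↑T ⊆ S ∧ Ideal.span (T : Set R) = Ideal.span S := by
  classical
  obtain ⟨G, hG⟩ := hfg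
  have key : ∀ x ∈ G, ∃ T : Finset R, ↑T ⊆ S ∧ x ∈ Ideal.span (T : Set R) := by
    intro x hx
    have : x ∈ Ideal.span S := hG ▸ Ideal.subset_span hx
    exact Submodule.mem_span_finite_of_mem_span this
  choose f hf1 hf2 using key
  refine ⟨G.attach.biUnion (fun x => f x.1 x.2), ?_, ?_⟩
  · intro y hy
    simp only [Finset.coe_biUnion, Set.mem_iUnion, Finset.mem_coe] at hy
    obtain ⟨x, _, hx2⟩ := hy
    exact hf1 x.1 x.2 hx2
  · apply le_antisymm
    · exact Ideal.span_mono (fun y hy => by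
        simp only [Finset.coe_biUnion, Set.mem_iUnion, Finset.mem_coe] at hy
        obtain ⟨x, _, hx2⟩ := hy
        exact hf1 x.1 x.2 hx2)
    · rw [← hG]
      apply Ideal.span_le.2
      intro x hx
      refine Ideal.span_mono ?_ (hf2 x hx)
      intro y hy
      simp only [Finset.coe_biUnion, Set.mem_iUnion, Finset.mem_coe]
      exact ⟨⟨x, hx⟩, Finset.mem_attach _ _, hy⟩

/-- In a Noetherian ring, an ideal satisfies the countable strong annihilator condition
iff it satisfies the strong annihilator condition. -/
theorem stmt11 {R : Type*} [CommRing R] [IsNoetherianRing R] (I : Ideal R) :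
    (∀ S : Set R, S.Countable → S ⊆ I →
      ∃ a ∈ I, {r : R | ∀ s ∈ S, r * s = 0} = {r : R | r * a = 0}) ↔
    (∀ F : Finset R, ↑F ⊆ (I : Set R) →
      ∃ a ∈ I, {r : R | ∀ s ∈ F, r * s = 0} = {r : R | r * a = 0}) := by
  constructor
  · intro h F hF
    obtain ⟨a, haI, ha⟩ := h (F : Set R) F.countable_toSet hF
    exact ⟨a, haI, by simpa using ha⟩
  · intro h S _ hS
    obtain ⟨T, hTS, hT⟩ := exists_finset_span_eq_aux S (IsNoetherian.noetherian _)
    obtain ⟨a, haI, ha⟩ := h T (hTS.trans hS)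
    refine ⟨a, haI, ?_⟩
    have key : ∀ r : R, (∀ s ∈ S, r * s = 0) ↔ (∀ s ∈ T, r * s = 0) := by
      intro r
      constructor
      · exact fun hr s hs => hr s (hTS hs)
      · intro hr s hs
        have hs' : s ∈ Ideal.span (T : Set R) := hT ▸ Ideal.subset_span hs
        rw [mul_comm]
        refine Submodule.span_induction (fun x hx => by rw [mul_comm]; exact hr x hx)
          (by simp) (fun x y _ _ hx hy => by rw [add_mul, hx, hy, add_zero])
          (fun c x _ hx => by rw [smul_eq_mul, mul_assoc, hx, mul_zero]) hs'
    ext r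
    simp only [Set.mem_setOf_eq, key]
    exact (Set.ext_iff.mp ha r)
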